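/- Let R = F_{q^a}[X;σ] with a | n. If s is a total divisor of t in R, then gcrd(s, X^n − 1) is a total divisor of gcrd(t, X^n − 1). -/

import Mathlib

noncomputable section

variable {K : Type*} [Field K]

/-- The twisted shift operator `X` (sends `∑ aᵢ Yⁱ` to `∑ σ(aᵢ) Yⁱ⁺¹` on coefficient
sequences), realizing the indeterminate of the skew polynomial ring `K[X;σ]`. -/
def skewX (σ : K →+* K) : AddMonoid.End (ℕ → K) where
  toFun v n := if n = 0 then 0 else σ (v (n - 1))
  map_zero' := by funext n; simp
  map_add' v w := by
    funext n
    by_cases h : n = 0 <;> simp [h, Pi.add_apply]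

/-- Left multiplication by the constant `a`, realizing the embedding of `K`
into the skew polynomial ring `K[X;σ]`. -/
def skewC (a : K) : AddMonoid.End (ℕ → K) where
  toFun v n := a * v n
  map_zero' := by funext n; simp
  map_add' v w := by funext n; simp [Pi.add_apply, mul_add]

/-- The skew polynomial ring `K[X;σ]`, realized concretely as the subring of additive
endomorphisms of `ℕ → K` generated by the constants and the twisted shift. -/
def SkewPolyRing (σ : K →+* K) : Subring (AddMonoid.End (ℕ → K)) :=
  Subring.closure (Set.range skewC ∪ {skewX σ})

/-- The indeterminate `X` as an element of `K[X;σ]`. -/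
def Xel (σ : K →+* K) : SkewPolyRing σ :=
  ⟨skewX σ, Subring.subset_closure (Set.mem_union_right _ rfl)⟩

/-- The constant `a` as an element of `K[X;σ]`. -/
def Cel (σ : K →+* K) (a : K) : SkewPolyRing σ :=
  ⟨skewC a, Subring.subset_closure (Set.mem_union_left _ ⟨a, rfl⟩)⟩

/-- The `i`-th coefficient of a skew polynomial (read off by acting on the
delta sequence at `0`). -/
def coeffS (σ : K →+* K) (p : SkewPolyRing σ) (i : ℕ) : K :=
  (p : AddMonoid.End (ℕ → K)) (fun n => if n = 0 then 1 else 0) i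

/-- The degree of a skew polynomial. -/
def natDegS (σ : K →+* K) (p : SkewPolyRing σ) : ℕ :=
  sSup {i | coeffS σ p i ≠ 0}

/-- A skew polynomial is monic if its leading coefficient is `1`. -/
def MonicS (σ : K →+* K) (p : SkewPolyRing σ) : Prop :=
  coeffS σ p (natDegS σ p) = 1

/-- `s` left-divides `t`. -/
def LDvd (σ : K →+* K) (s t : SkewPolyRing σ) : Prop := ∃ u, t = s * u

/-- `s` right-divides `t`. -/
def RDvd (σ : K →+* K) (s t : SkewPolyRing σ) : Prop := ∃ u, t = u * s

/-- `s` is a total divisor of `t`: `s` left-divides `u*t` and right-divides `t*u`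
for every `u`. -/
def TotalDvd (σ : K →+* K) (s t : SkewPolyRing σ) : Prop :=
  ∀ u, LDvd σ s (u * t) ∧ RDvd σ s (t * u)

/-- `d` is the monic greatest common right divisor of `f` and `g`. -/
def IsGcrd (σ : K →+* K) (d f g : SkewPolyRing σ) : Prop :=
  MonicS σ d ∧ RDvd σ d f ∧ RDvd σ d g ∧ ∀ e, RDvd σ e f → RDvd σ e g → RDvd σ e d

/-- The two-sided ideal `RtR` generated by `t`, as an additive subgroup. -/
def TwoSidedGen (σ : K →+* K) (t : SkewPolyRing σ) : AddSubgroup (SkewPolyRing σ) :=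
  AddSubgroup.closure {x | ∃ r r', x = r * t * r'}


namespace SkewAux

open Finset

variable {K : Type*} [Field K]

theorem triangle {M : Type*} [AddCommMonoid M] (F : ℕ → ℕ → M) :
    ∀ m : ℕ, ∑ i ∈ range (m+1), ∑ j ∈ range (m+1-i), F i j
      = ∑ k ∈ range (m+1), ∑ i ∈ range (k+1), F i (k-i) := by
  intro m
  induction m with
  | zero => simp
  | succ m ih =>
    have h1 : ∀ i ∈ range (m+2), ∑ j ∈ range (m+2-i), F i j
        = (∑ j ∈ range (m+1-i), F i j) + F i (m+1-i) := by
      intro i hi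
      have : m + 2 - i = (m + 1 - i) + 1 := by
        simp only [mem_range] at hi; omega
      rw [this, Finset.sum_range_succ]
    rw [Finset.sum_congr rfl h1, Finset.sum_add_distrib]
    have h2 : ∑ i ∈ range (m+2), ∑ j ∈ range (m+1-i), F i j
        = ∑ i ∈ range (m+1), ∑ j ∈ range (m+1-i), F i j := by
      rw [Finset.sum_range_succ]
      simp
    rw [h2, ih]
    exact (Finset.sum_range_succ (fun k => ∑ i ∈ range (k+1), F i (k-i)) (m+1)).symm

variable (σ : K →+* K)

/-- representation property for an additive endomorphism -/
def Rep (f : AddMonoid.End (ℕ → K)) : Prop :=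
  ∃ c : ℕ → K, ∃ D : ℕ, (∀ i, D < i → c i = 0) ∧
    ∀ (v : ℕ → K) (m : ℕ), f v m = ∑ i ∈ range (m+1), c i * (σ ^ i) (v (m - i))

theorem rep_C (a : K) : Rep σ (skewC a) := by
  refine ⟨fun i => if i = 0 then a else 0, 0, fun i hi => by simp [Nat.pos_iff_ne_zero.mp hi],
    fun v m => ?_⟩
  rw [Finset.sum_eq_single 0]
  · show a * v m = a * (σ ^ 0) (v (m - 0))
    simp
  · intro b _ hb; simp [hb]
  · simp

theorem rep_X : Rep σ (skewX σ) := by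
  refine ⟨fun i => if i = 1 then 1 else 0, 1, fun i hi => by simp [Nat.ne_of_gt hi], fun v m => ?_⟩
  show (if m = 0 then 0 else σ (v (m-1))) = _
  rcases Nat.eq_zero_or_pos m with hm | hm
  · subst hm; simp
  · rw [if_neg (Nat.pos_iff_ne_zero.mp hm), Finset.sum_eq_single 1]
    · simp [pow_one]
    · intro b _ hb; simp [hb]
    · intro hm1; simp only [mem_range] at hm1; omega

theorem rep_zero : Rep σ 0 :=
  ⟨0, 0, fun _ _ => rfl, fun v m => by simp⟩

theorem rep_one : Rep σ 1 := by
  refine ⟨fun i => if i = 0 then 1 else 0, 0, fun i hi => by simp [Nat.pos_iff_ne_zero.mp hi],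
    fun v m => ?_⟩
  rw [Finset.sum_eq_single 0]
  · show v m = _; simp
  · intro b _ hb; simp [hb]
  · simp

theorem rep_add {f g : AddMonoid.End (ℕ → K)} (hf : Rep σ f) (hg : Rep σ g) :
    Rep σ (f + g) := by
  obtain ⟨c, D, hc, hf⟩ := hf
  obtain ⟨d, E, hd, hg⟩ := hg
  refine ⟨c + d, D + E, fun i hi => ?_, fun v m => ?_⟩
  · have := hc i (by omega); have := hd i (by omega)
    simp_all [Pi.add_apply]
  · show f v m + g v m = _
    rw [hf, hg, ← Finset.sum_add_distrib]
    exact Finset.sum_congr rfl fun i _ => by simp [Pi.add_apply, add_mul]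

theorem rep_neg {f : AddMonoid.End (ℕ → K)} (hf : Rep σ f) : Rep σ (-f) := by
  obtain ⟨c, D, hc, hf⟩ := hf
  refine ⟨-c, D, fun i hi => by simp [hc i hi], fun v m => ?_⟩
  show -(f v m) = _
  rw [hf, ← Finset.sum_neg_distrib]
  exact Finset.sum_congr rfl fun i _ => by simp

theorem rep_mul {f g : AddMonoid.End (ℕ → K)} (hf : Rep σ f) (hg : Rep σ g) :
    Rep σ (f * g) := by
  obtain ⟨c, D, hc, hf⟩ := hf
  obtain ⟨d, E, hd, hg⟩ := hg
  refine ⟨fun k => ∑ i ∈ range (k+1), c i * (σ ^ i) (d (k - i)), D + E,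
    fun k hk => ?_, fun v m => ?_⟩
  · apply Finset.sum_eq_zero
    intro i hi
    simp only [mem_range] at hi
    rcases le_or_gt i D with h | h
    · rw [hd (k - i) (by omega), map_zero, mul_zero]
    · rw [hc i h, zero_mul]
  · show f (g v) m = _
    rw [hf]
    have step : ∀ i ∈ range (m+1),
        c i * (σ ^ i) (g v (m - i)) = ∑ j ∈ range (m+1-i), c i * (σ ^ i) (d j) * (σ ^ (i+j)) (v (m - i - j)) := by
      intro i hi
      simp only [mem_range] at hi
      rw [hg v (m - i), map_sum, Finset.mul_sum]
      have : m - i + 1 = m + 1 - i := by omega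
      rw [this]
      refine Finset.sum_congr rfl fun j hj => ?_
      rw [map_mul, ← mul_assoc, pow_add]
      rfl
    rw [Finset.sum_congr rfl step, triangle (fun i j => c i * (σ ^ i) (d j) * (σ ^ (i+j)) (v (m - i - j))) m]
    refine Finset.sum_congr rfl fun k hk => ?_
    rw [Finset.sum_mul]
    refine Finset.sum_congr rfl fun i hi => ?_
    simp only [mem_range] at hk hi
    have h1 : i + (k - i) = k := by omega
    have h2 : m - i - (k - i) = m - k := by omega
    rw [h1, h2]

theorem rep_all (p : SkewPolyRing σ) : Rep σ (p : AddMonoid.End (ℕ → K)) := by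
  obtain ⟨f, hf⟩ := p
  refine Subring.closure_induction (fun x hx => ?_) (rep_zero σ) (rep_one σ)
    (fun x y _ _ hx hy => rep_add σ hx hy) (fun x _ hx => rep_neg σ hx)
    (fun x y _ _ hx hy => rep_mul σ hx hy) hf
  rcases hx with ⟨a, rfl⟩ | hx
  · exact rep_C σ a
  · rw [Set.mem_singleton_iff] at hx
    subst hx
    exact rep_X σ

end SkewAux
namespace SkewAux

open Finset

variable {K : Type*} [Field K] (σ : K →+* K)

def dlt : ℕ → K := fun n => if n = 0 then 1 else 0

theorem coeffS_def (p : SkewPolyRing σ) (i : ℕ) :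
    coeffS σ p i = (p : AddMonoid.End (ℕ → K)) (dlt) i := rfl

/-- the action formula, with coefficients given by `coeffS` -/
theorem act (p : SkewPolyRing σ) (v : ℕ → K) (m : ℕ) :
    (p : AddMonoid.End (ℕ → K)) v m
      = ∑ i ∈ range (m+1), coeffS σ p i * (σ ^ i) (v (m - i)) := by
  obtain ⟨c, D, hD, hact⟩ := rep_all σ p
  have hc : ∀ i, coeffS σ p i = c i := by
    intro i
    rw [coeffS_def, hact]
    rw [Finset.sum_eq_single i]
    · simp [dlt]
    · intro b hb hbi
      simp only [mem_range] at hb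
      have : i - b ≠ 0 := by omega
      simp [dlt, this]
    · intro hi; simp at hi
  rw [hact]
  exact Finset.sum_congr rfl fun i _ => by rw [hc]

theorem coeff_bound (p : SkewPolyRing σ) : ∃ D, ∀ i, D < i → coeffS σ p i = 0 := by
  obtain ⟨c, D, hD, hact⟩ := rep_all σ p
  refine ⟨D, fun i hi => ?_⟩
  rw [coeffS_def, hact, Finset.sum_eq_zero]
  intro j hj
  simp only [mem_range] at hj
  rcases le_or_gt j D with h | h
  · have : i - j ≠ 0 := by omega
    simp [dlt, this]
  · simp [hD j h]

theorem ext_coeff {p q : SkewPolyRing σ} (h : ∀ i, coeffS σ p i = coeffS σ q i) : p = q := by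
  apply Subtype.ext
  apply AddMonoidHom.ext
  intro v
  funext m
  refine (act σ p v m).trans (Eq.trans ?_ (act σ q v m).symm)
  exact Finset.sum_congr rfl fun i _ => by rw [h]

@[simp] theorem coeff_zero (i : ℕ) : coeffS σ (0 : SkewPolyRing σ) i = 0 := rfl

@[simp] theorem coeff_add (p q : SkewPolyRing σ) (i : ℕ) :
    coeffS σ (p + q) i = coeffS σ p i + coeffS σ q i := rfl

@[simp] theorem coeff_neg (p : SkewPolyRing σ) (i : ℕ) :
    coeffS σ (-p) i = - coeffS σ p i := rfl

@[simp] theorem coeff_sub (p q : SkewPolyRing σ) (i : ℕ) :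
    coeffS σ (p - q) i = coeffS σ p i - coeffS σ q i := by
  rw [sub_eq_add_neg, coeff_add, coeff_neg, sub_eq_add_neg]

theorem coeff_mul (p q : SkewPolyRing σ) (k : ℕ) :
    coeffS σ (p * q) k = ∑ i ∈ range (k+1), coeffS σ p i * (σ ^ i) (coeffS σ q (k - i)) := by
  have : coeffS σ (p * q) k = (p : AddMonoid.End (ℕ → K)) ((q : AddMonoid.End (ℕ → K)) dlt) k := rfl
  rw [this, act]
  exact Finset.sum_congr rfl fun i _ => rfl

@[simp] theorem coeff_Cel (a : K) (i : ℕ) :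
    coeffS σ (Cel σ a) i = if i = 0 then a else 0 := by
  show a * dlt i = _
  by_cases h : i = 0 <;> simp [dlt, h]

@[simp] theorem coeff_one (i : ℕ) : coeffS σ (1 : SkewPolyRing σ) i = if i = 0 then 1 else 0 := by
  show dlt i = _
  by_cases h : i = 0 <;> simp [dlt, h]

@[simp] theorem coeff_Xpow (k i : ℕ) :
    coeffS σ (Xel σ ^ k) i = if i = k then 1 else 0 := by
  induction k generalizing i with
  | zero => rw [pow_zero, coeff_one]
  | succ k ih =>
    rw [pow_succ, coeff_mul]
    rcases Nat.lt_or_ge i (k+1) with h | h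
    · rw [Finset.sum_eq_zero, if_neg (by omega)]
      intro j hj
      simp only [mem_range] at hj
      rw [ih]
      by_cases hjk : j = k
      · rw [if_pos hjk, one_mul, hjk]
        have h0 : i - k = 0 := by omega
        rw [h0]
        have hx0 : coeffS σ (Xel σ) 0 = 0 := rfl
        rw [hx0, map_zero]
      · rw [if_neg hjk, zero_mul]
    · rw [Finset.sum_eq_single k]
      · rw [ih, if_pos rfl, one_mul]
        have hx : ∀ j, coeffS σ (Xel σ) j = if j = 1 then 1 else 0 := by
          intro j
          show (if j = 0 then (0:K) else σ (dlt (j-1))) = _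
          rcases Nat.eq_zero_or_pos j with hj | hj
          · simp [hj]
          · rw [if_neg (by omega)]
            by_cases hj1 : j = 1
            · simp [hj1, dlt]
            · have : j - 1 ≠ 0 := by omega
              simp [dlt, this, hj1]
        rw [hx]
        by_cases hik : i = k + 1
        · rw [if_pos (by omega), if_pos hik, map_one]
        · rw [if_neg (by omega), if_neg hik, map_zero]
      · intro b _ hb
        rw [ih, if_neg hb, zero_mul]
      · intro hk; simp only [mem_range] at hk; omega

end SkewAux
namespace SkewAux

open Finset

variable {K : Type*} [Field K] (σ : K →+* K)

theorem eq_zero_of_coeff (p : SkewPolyRing σ) (h : ∀ i, coeffS σ p i = 0) : p = 0 :=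
  ext_coeff σ fun i => by rw [h, coeff_zero]

theorem bddAbove_supp (p : SkewPolyRing σ) : BddAbove {i | coeffS σ p i ≠ 0} := by
  obtain ⟨D, hD⟩ := coeff_bound σ p
  exact ⟨D, fun i hi => by by_contra hc; exact hi (hD i (by omega))⟩

theorem lc_ne_zero {p : SkewPolyRing σ} (hp : p ≠ 0) : coeffS σ p (natDegS σ p) ≠ 0 := by
  have hne : {i | coeffS σ p i ≠ 0}.Nonempty := by
    by_contra hc
    rw [Set.not_nonempty_iff_eq_empty] at hc
    refine hp (eq_zero_of_coeff σ p fun i => not_not.mp fun h => ?_)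
    exact absurd hc (Set.nonempty_iff_ne_empty.mp ⟨i, h⟩)
  exact Nat.sSup_mem hne (bddAbove_supp σ p)

theorem deg_le_of {p : SkewPolyRing σ} {i : ℕ} (h : coeffS σ p i ≠ 0) : i ≤ natDegS σ p :=
  le_csSup (bddAbove_supp σ p) h

theorem coeff_deg_lt {p : SkewPolyRing σ} {i : ℕ} (h : natDegS σ p < i) : coeffS σ p i = 0 := by
  by_contra hc
  exact absurd (deg_le_of σ hc) (by omega)

theorem natDeg_le {p : SkewPolyRing σ} {D : ℕ} (h : ∀ i, D < i → coeffS σ p i = 0) :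
    natDegS σ p ≤ D := by
  rcases Set.eq_empty_or_nonempty {i | coeffS σ p i ≠ 0} with he | hne
  · unfold natDegS; rw [he]
    have : sSup (∅ : Set ℕ) = 0 := csSup_empty
    rw [this]; exact Nat.zero_le D
  · exact csSup_le hne fun i hi => by by_contra hc; exact hi (h i (by omega))

theorem natDeg_eq {p : SkewPolyRing σ} {D : ℕ} (hne : coeffS σ p D ≠ 0)
    (h : ∀ i, D < i → coeffS σ p i = 0) : natDegS σ p = D :=
  le_antisymm (natDeg_le σ h) (deg_le_of σ hne)

/-- leading coefficient of a product, and vanishing above. -/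
theorem coeff_mul_top (p q : SkewPolyRing σ) :
    coeffS σ (p * q) (natDegS σ p + natDegS σ q)
      = coeffS σ p (natDegS σ p) * (σ ^ natDegS σ p) (coeffS σ q (natDegS σ q)) := by
  rw [coeff_mul, Finset.sum_eq_single (natDegS σ p)]
  · rw [Nat.add_sub_cancel_left]
  · intro b hb hbne
    rcases Nat.lt_or_ge b (natDegS σ p) with h | h
    · have : natDegS σ q < natDegS σ p + natDegS σ q - b := by omega
      rw [coeff_deg_lt σ this, map_zero, mul_zero]
    · rw [coeff_deg_lt σ (by omega), zero_mul]
  · intro hmem; simp only [mem_range] at hmem; omega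

theorem coeff_mul_past (p q : SkewPolyRing σ) (k : ℕ) (hk : natDegS σ p + natDegS σ q < k) :
    coeffS σ (p * q) k = 0 := by
  rw [coeff_mul, Finset.sum_eq_zero]
  intro i hi
  simp only [mem_range] at hi
  rcases Nat.lt_or_ge (natDegS σ p) i with h | h
  · rw [coeff_deg_lt σ h, zero_mul]
  · rw [coeff_deg_lt σ (show natDegS σ q < k - i by omega), map_zero, mul_zero]

theorem mul_ne_zero' {p q : SkewPolyRing σ} (hp : p ≠ 0) (hq : q ≠ 0) : p * q ≠ 0 := by
  intro hz
  have := coeff_mul_top σ p q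
  rw [hz, coeff_zero] at this
  have h1 := lc_ne_zero σ hp
  have h2 := lc_ne_zero σ hq
  have h3 : (σ ^ natDegS σ p) (coeffS σ q (natDegS σ q)) ≠ 0 := by
    intro h; exact h2 (RingHom.injective _ (by rw [h, map_zero]))
  exact (mul_ne_zero h1 h3) this.symm

theorem natDeg_mul {p q : SkewPolyRing σ} (hp : p ≠ 0) (hq : q ≠ 0) :
    natDegS σ (p * q) = natDegS σ p + natDegS σ q := by
  apply natDeg_eq
  · rw [coeff_mul_top]
    refine mul_ne_zero (lc_ne_zero σ hp) fun h => (lc_ne_zero σ hq) ?_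
    exact RingHom.injective _ (by rw [h, map_zero])
  · exact fun i hi => coeff_mul_past σ p q i hi

theorem cancel_left {g x y : SkewPolyRing σ} (hg : g ≠ 0) (h : g * x = g * y) : x = y := by
  by_contra hne
  have hxy : x - y ≠ 0 := fun hc => hne (by linear_combination (norm := abel) hc)
  have : g * (x - y) = 0 := by rw [mul_sub, h, sub_self]
  exact mul_ne_zero' σ hg hxy this

theorem monic_ne_zero {p : SkewPolyRing σ} (hp : MonicS σ p) : p ≠ 0 := by
  intro hz
  rw [MonicS, hz, coeff_zero] at hp
  exact zero_ne_one hp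

end SkewAux
namespace SkewAux

open Finset

variable {K : Type*} [Field K] (σ : K →+* K)

theorem coeff_Cmul (a : K) (p : SkewPolyRing σ) (j : ℕ) :
    coeffS σ (Cel σ a * p) j = a * coeffS σ p j := by
  rw [coeff_mul, Finset.sum_eq_single 0]
  · simp
  · intro b _ hb; simp [hb]
  · simp

theorem coeff_monomial_mul (a : K) (k : ℕ) (p : SkewPolyRing σ) (j : ℕ) :
    coeffS σ (Cel σ a * Xel σ ^ k * p) j
      = if k ≤ j then a * (σ ^ k) (coeffS σ p (j - k)) else 0 := by
  rw [mul_assoc, coeff_Cmul, coeff_mul]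
  by_cases h : k ≤ j
  · rw [if_pos h, Finset.sum_eq_single k]
    · rw [coeff_Xpow, if_pos rfl, one_mul]
    · intro b _ hb; rw [coeff_Xpow, if_neg hb, zero_mul]
    · intro hk; simp only [mem_range] at hk; omega
  · rw [if_neg h, Finset.sum_eq_zero, mul_zero]
    intro i hi
    simp only [mem_range] at hi
    rw [coeff_Xpow, if_neg (by omega), zero_mul]

theorem coeff_mul_monomial (b : K) (k : ℕ) (p : SkewPolyRing σ) (j : ℕ) :
    coeffS σ (p * (Cel σ b * Xel σ ^ k)) j
      = if k ≤ j then coeffS σ p (j - k) * (σ ^ (j - k)) b else 0 := by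
  rw [coeff_mul]
  have hco : ∀ l, coeffS σ (Cel σ b * Xel σ ^ k) l = if l = k then b else 0 := by
    intro l
    rw [coeff_Cmul, coeff_Xpow]
    by_cases h : l = k <;> simp [h]
  by_cases h : k ≤ j
  · rw [if_pos h, Finset.sum_eq_single (j - k)]
    · rw [hco, if_pos (by omega)]
    · intro i hi hne
      simp only [mem_range] at hi
      rw [hco, if_neg (by omega), map_zero, mul_zero]
    · intro hk; simp only [mem_range] at hk; omega
  · rw [if_neg h, Finset.sum_eq_zero]
    intro i hi
    simp only [mem_range] at hi
    rw [hco, if_neg (by omega), map_zero, mul_zero]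

set_option maxHeartbeats 1000000 in
/-- Right division by a monic: `f = q * g + r`. -/
theorem rdiv {g : SkewPolyRing σ} (hg : MonicS σ g) (f : SkewPolyRing σ) :
    ∃ q r, f = q * g + r ∧ (r = 0 ∨ natDegS σ r < natDegS σ g) := by
  obtain ⟨n, hn⟩ : ∃ n, natDegS σ f ≤ n := ⟨natDegS σ f, le_refl _⟩
  induction n using Nat.strong_induction_on generalizing f with
  | _ n ih =>
  by_cases hf0 : f = 0
  · exact ⟨0, 0, by rw [hf0, zero_mul, add_zero], Or.inl rfl⟩
  by_cases hdeg : natDegS σ f < natDegS σ g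
  · exact ⟨0, f, by rw [zero_mul, zero_add], Or.inr hdeg⟩
  push_neg at hdeg
  set df := natDegS σ f with hdf
  set dg := natDegS σ g with hdg
  set c := coeffS σ f df with hc
  set m : SkewPolyRing σ := Cel σ c * Xel σ ^ (df - dg) with hm
  set f' := f - m * g with hf'
  have hcoeff : ∀ j, df ≤ j → coeffS σ f' j = 0 := by
    intro j hj
    rw [hf', coeff_sub, coeff_monomial_mul, if_pos (by omega)]
    rcases Nat.lt_or_ge df j with h | h
    · rw [coeff_deg_lt σ h, coeff_deg_lt σ (p := g) (by omega), map_zero, mul_zero, sub_zero]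
    · have hjdf : j = df := by omega
      rw [hjdf]
      have : df - (df - dg) = dg := by omega
      rw [this, hg, map_one, mul_one, sub_self]
  by_cases hf'0 : f' = 0
  · refine ⟨m, 0, ?_, Or.inl rfl⟩
    have : f - m * g = 0 := hf'0
    rw [add_zero]; linear_combination (norm := abel) this
  · have hdf' : natDegS σ f' ≤ df - 1 := by
      apply natDeg_le
      intro i hi
      rcases Nat.eq_zero_or_pos df with h0 | h0
      · exact hcoeff i (by omega)
      · exact hcoeff i (by omega)
    have hdfpos : 1 ≤ df := by
      by_contra hc0
      have hdf0 : df = 0 := by omega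
      apply hf'0
      apply eq_zero_of_coeff
      intro i
      exact hcoeff i (by omega)
    obtain ⟨q', r, hqr, hr⟩ := ih (df - 1) (by omega) f' hdf'
    refine ⟨m + q', r, ?_, hr⟩
    rw [add_mul]
    have : f' = q' * g + r := hqr
    rw [hf'] at this
    linear_combination (norm := abel) this
set_option maxHeartbeats 1000000 in
/-- Left division by a monic, assuming `σ` surjective: `f = g * q + r`. -/
theorem ldiv (hs : Function.Surjective σ) {g : SkewPolyRing σ} (hg : MonicS σ g)
    (f : SkewPolyRing σ) :
    ∃ q r, f = g * q + r ∧ (r = 0 ∨ natDegS σ r < natDegS σ g) := by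
  have hsp : ∀ k : ℕ, Function.Surjective (σ ^ k : K →+* K) := by
    intro k
    induction k with
    | zero => intro x; exact ⟨x, rfl⟩
    | succ k ihk =>
      intro x
      obtain ⟨y, hy⟩ := ihk x
      obtain ⟨z, hz⟩ := hs y
      refine ⟨z, ?_⟩
      rw [pow_succ]
      show (σ ^ k) (σ z) = x
      rw [hz, hy]
  obtain ⟨n, hn⟩ : ∃ n, natDegS σ f ≤ n := ⟨natDegS σ f, le_refl _⟩
  induction n using Nat.strong_induction_on generalizing f with
  | _ n ih =>
  by_cases hf0 : f = 0
  · exact ⟨0, 0, by rw [hf0, mul_zero, add_zero], Or.inl rfl⟩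
  by_cases hdeg : natDegS σ f < natDegS σ g
  · exact ⟨0, f, by rw [mul_zero, zero_add], Or.inr hdeg⟩
  push_neg at hdeg
  set df := natDegS σ f with hdf
  set dg := natDegS σ g with hdg
  obtain ⟨b, hb⟩ := hsp dg (coeffS σ f df)
  set m : SkewPolyRing σ := Cel σ b * Xel σ ^ (df - dg) with hm
  set f' := f - g * m with hf'
  have hcoeff : ∀ j, df ≤ j → coeffS σ f' j = 0 := by
    intro j hj
    rw [hf', coeff_sub, coeff_mul_monomial, if_pos (by omega)]
    rcases Nat.lt_or_ge df j with h | h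
    · rw [coeff_deg_lt σ h, coeff_deg_lt σ (p := g) (by omega), zero_mul, sub_zero]
    · have hjdf : j = df := by omega
      rw [hjdf]
      have h1 : df - (df - dg) = dg := by omega
      rw [h1, hg, one_mul, hb, sub_self]
  by_cases hf'0 : f' = 0
  · refine ⟨m, 0, ?_, Or.inl rfl⟩
    have : f - g * m = 0 := hf'0
    rw [add_zero]; linear_combination (norm := abel) this
  · have hdf' : natDegS σ f' ≤ df - 1 := by
      apply natDeg_le
      intro i hi
      exact hcoeff i (by omega)
    have hdfpos : 1 ≤ df := by
      by_contra hc0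
      have hdf0 : df = 0 := by omega
      apply hf'0
      apply eq_zero_of_coeff
      intro i
      exact hcoeff i (by omega)
    obtain ⟨q', r, hqr, hr⟩ := ih (df - 1) (by omega) f' hdf'
    refine ⟨m + q', r, ?_, hr⟩
    rw [mul_add]
    have : f' = g * q' + r := hqr
    rw [hf'] at this
    linear_combination (norm := abel) this

end SkewAux
namespace SkewAux

open Finset

variable {K : Type*} [Field K] (σ : K →+* K)

theorem Cel_one : Cel σ (1 : K) = 1 :=
  ext_coeff σ fun i => by rw [coeff_Cel, coeff_one]

theorem normalize {C₀ : SkewPolyRing σ} (h : C₀ ≠ 0) :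
    ∃ a : K, a ≠ 0 ∧ MonicS σ (Cel σ a * C₀)
      ∧ natDegS σ (Cel σ a * C₀) = natDegS σ C₀ := by
  have hlc := lc_ne_zero σ h
  refine ⟨(coeffS σ C₀ (natDegS σ C₀))⁻¹, inv_ne_zero hlc, ?_, ?_⟩
  · unfold MonicS
    have hdeq : natDegS σ (Cel σ (coeffS σ C₀ (natDegS σ C₀))⁻¹ * C₀) = natDegS σ C₀ := by
      apply natDeg_eq
      · rw [coeff_Cmul]
        exact mul_ne_zero (inv_ne_zero hlc) hlc
      · intro i hi
        rw [coeff_Cmul, coeff_deg_lt σ hi, mul_zero]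
    rw [hdeq, coeff_Cmul, inv_mul_cancel₀ hlc]
  · apply natDeg_eq
    · rw [coeff_Cmul]
      exact mul_ne_zero (inv_ne_zero hlc) hlc
    · intro i hi
      rw [coeff_Cmul, coeff_deg_lt σ hi, mul_zero]

/-- In a two-sided additive subgroup of `K[X;σ]` containing a nonzero element, the monic
element of minimal degree both left- and right-divides every element of the subgroup. -/
theorem exists_invariant_generator (hs : Function.Surjective σ)
    (J : AddSubgroup (SkewPolyRing σ))
    (hL : ∀ (r x : SkewPolyRing σ), x ∈ J → r * x ∈ J)
    (hR : ∀ (x r : SkewPolyRing σ), x ∈ J → x * r ∈ J)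
    (hne : ∃ x ∈ J, x ≠ 0) :
    ∃ C, MonicS σ C ∧ C ∈ J ∧ (∀ x ∈ J, RDvd σ C x) ∧ (∀ x ∈ J, LDvd σ C x) := by
  set S : Set ℕ := {d | ∃ x ∈ J, x ≠ 0 ∧ natDegS σ x = d} with hS
  have hSne : S.Nonempty := by
    obtain ⟨x, hxJ, hx0⟩ := hne
    exact ⟨natDegS σ x, x, hxJ, hx0, rfl⟩
  obtain ⟨C₀, hC₀J, hC₀0, hC₀d⟩ := Nat.sInf_mem hSne
  obtain ⟨α, hα0, hαm, hαd⟩ := normalize σ hC₀0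
  set C := Cel σ α * C₀ with hC
  have hCJ : C ∈ J := hL _ _ hC₀J
  have hCd : natDegS σ C = sInf S := by rw [hαd, hC₀d]
  refine ⟨C, hαm, hCJ, ?_, ?_⟩
  · intro x hxJ
    obtain ⟨qq, r, hqr, hr⟩ := rdiv σ hαm x
    have hrJ : r ∈ J := by
      have hreq : r = x - qq * C := by rw [hqr]; abel
      rw [hreq]
      exact AddSubgroup.sub_mem J hxJ (hL _ _ hCJ)
    rcases hr with hr0 | hrd
    · exact ⟨qq, by rw [hqr, hr0, add_zero]⟩
    · by_cases hr0 : r = 0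
      · exact ⟨qq, by rw [hqr, hr0, add_zero]⟩
      · exfalso
        have hle : sInf S ≤ natDegS σ r := Nat.sInf_le ⟨r, hrJ, hr0, rfl⟩
        rw [hCd] at hrd; omega
  · intro x hxJ
    obtain ⟨qq, r, hqr, hr⟩ := ldiv σ hs hαm x
    have hrJ : r ∈ J := by
      have hreq : r = x - C * qq := by rw [hqr]; abel
      rw [hreq]
      exact AddSubgroup.sub_mem J hxJ (hR _ _ hCJ)
    rcases hr with hr0 | hrd
    · exact ⟨qq, by rw [hqr, hr0, add_zero]⟩
    · by_cases hr0 : r = 0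
      · exact ⟨qq, by rw [hqr, hr0, add_zero]⟩
      · exfalso
        have hle : sInf S ≤ natDegS σ r := Nat.sInf_le ⟨r, hrJ, hr0, rfl⟩
        rw [hCd] at hrd; omega

/-- If `σ^n = id` on `K`, then `X^n` is central. -/
theorem Xpow_comm (n : ℕ) (hid : ∀ x : K, (σ ^ n) x = x) (p : SkewPolyRing σ) :
    Xel σ ^ n * p = p * Xel σ ^ n := by
  apply ext_coeff
  intro j
  have h1 : Xel σ ^ n * p = Cel σ 1 * Xel σ ^ n * p := by rw [Cel_one, one_mul]
  have h2 : p * Xel σ ^ n = p * (Cel σ 1 * Xel σ ^ n) := by rw [Cel_one, one_mul]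
  rw [h1, h2, coeff_monomial_mul, coeff_mul_monomial]
  by_cases h : n ≤ j
  · rw [if_pos h, if_pos h, one_mul, map_one, mul_one]
    exact hid _
  · rw [if_neg h, if_neg h]

end SkewAux

set_option maxHeartbeats 2000000 in
theorem stmt13' {K : Type*} [Field K] [Fintype K]
    (q a n : ℕ) (hq : IsPrimePow q) (hK : Fintype.card K = q ^ a) (han : a ∣ n)
    (σ : K →+* K) (hσ : ∀ x : K, σ x = x ^ q)
    (s t gs gt : SkewPolyRing σ) (h : TotalDvd σ s t)
    (hgs : IsGcrd σ gs s (Xel σ ^ n - 1)) (hgt : IsGcrd σ gt t (Xel σ ^ n - 1)) :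
    TotalDvd σ gs gt := by
  classical
  open SkewAux in
  -- basic facts about σ
  have hsurj : Function.Surjective σ := Finite.injective_iff_surjective.mp (RingHom.injective σ)
  have hpow : ∀ (k : ℕ) (x : K), (σ ^ k) x = x ^ q ^ k := by
    intro k
    induction k with
    | zero => intro x; simp
    | succ k ih =>
      intro x
      rw [pow_succ]
      show (σ ^ k) (σ x) = _
      rw [ih, hσ, ← pow_mul, ← pow_succ']
  have hcard : ∀ x : K, x ^ q ^ a = x := fun x => by rw [← hK]; exact FiniteField.pow_card x
  have hid : ∀ x : K, (σ ^ n) x = x := by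
    obtain ⟨m, rfl⟩ := han
    have haux : ∀ (m : ℕ) (x : K), x ^ q ^ (a * m) = x := by
      intro m
      induction m with
      | zero => intro x; simp
      | succ m ih =>
        intro x
        rw [mul_add, mul_one, pow_add, pow_mul, ih, hcard]
    intro x
    rw [hpow, haux]
  set N : SkewPolyRing σ := Xel σ ^ n - 1 with hN
  have hNcomm : ∀ p : SkewPolyRing σ, N * p = p * N := by
    intro p
    rw [hN, sub_mul, one_mul, mul_sub, mul_one, Xpow_comm σ n hid p]
  by_cases hz : t = 0 ∧ N = 0
  · exfalso
    have h0t : RDvd σ 0 t := ⟨0, by rw [hz.1, mul_zero]⟩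
    have h0N : RDvd σ 0 N := ⟨0, by rw [hz.2, mul_zero]⟩
    obtain ⟨u, hu⟩ := hgt.2.2.2 0 h0t h0N
    exact monic_ne_zero σ hgt.1 (by rw [hu, mul_zero])
  · have hGJ : True := trivial
    let G : Set (SkewPolyRing σ) :=
      {x | (∃ r r', x = r * t * r') ∨ (∃ r r', x = r * N * r')}
    let J : AddSubgroup (SkewPolyRing σ) := AddSubgroup.closure G
    have htJ : t ∈ J := AddSubgroup.subset_closure (Or.inl ⟨1, 1, by rw [one_mul, mul_one]⟩)
    have hNJ : N ∈ J := AddSubgroup.subset_closure (Or.inr ⟨1, 1, by rw [one_mul, mul_one]⟩)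
    have hne : ∃ x ∈ J, x ≠ 0 := by
      rcases not_and_or.mp hz with h0 | h0
      · exact ⟨t, htJ, h0⟩
      · exact ⟨N, hNJ, h0⟩
    have hL : ∀ r x : SkewPolyRing σ, x ∈ J → r * x ∈ J := by
      intro r x hx
      induction hx using AddSubgroup.closure_induction with
      | mem y hy =>
        rcases hy with ⟨r₁, r₁', hy⟩ | ⟨r₁, r₁', hy⟩
        · exact AddSubgroup.subset_closure (Or.inl ⟨r * r₁, r₁', by rw [hy]; noncomm_ring⟩)
        · exact AddSubgroup.subset_closure (Or.inr ⟨r * r₁, r₁', by rw [hy]; noncomm_ring⟩)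
      | zero => rw [mul_zero]; exact zero_mem J
      | add y z _ _ hy hz => rw [mul_add]; exact add_mem hy hz
      | neg y _ hy => rw [mul_neg]; exact neg_mem hy
    have hR : ∀ x r : SkewPolyRing σ, x ∈ J → x * r ∈ J := by
      intro x r hx
      induction hx using AddSubgroup.closure_induction with
      | mem y hy =>
        rcases hy with ⟨r₁, r₁', hy⟩ | ⟨r₁, r₁', hy⟩
        · exact AddSubgroup.subset_closure (Or.inl ⟨r₁, r₁' * r, by rw [hy]; noncomm_ring⟩)
        · exact AddSubgroup.subset_closure (Or.inr ⟨r₁, r₁' * r, by rw [hy]; noncomm_ring⟩)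
      | zero => rw [zero_mul]; exact zero_mem J
      | add y z _ _ hy hz => rw [add_mul]; exact add_mem hy hz
      | neg y _ hy => rw [neg_mul]; exact neg_mem hy
    -- gs right-divides every element of J
    have hgsJ : ∀ x ∈ J, RDvd σ gs x := by
      intro x hx
      induction hx using AddSubgroup.closure_induction with
      | mem y hy =>
        rcases hy with ⟨r₁, r₁', hy⟩ | ⟨r₁, r₁', hy⟩
        · obtain ⟨v, hv⟩ := (h r₁').2
          obtain ⟨w, hw⟩ := hgs.2.1
          exact ⟨r₁ * (v * w), by rw [hy, mul_assoc, hv, hw]; noncomm_ring⟩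
        · obtain ⟨p0, hp0⟩ := hgs.2.2.1
          exact ⟨r₁ * r₁' * p0, by rw [hy, mul_assoc, hNcomm r₁', hp0]; noncomm_ring⟩
      | zero => exact ⟨0, (zero_mul gs).symm⟩
      | add y z _ _ hy hz =>
        obtain ⟨u1, hu1⟩ := hy
        obtain ⟨u2, hu2⟩ := hz
        exact ⟨u1 + u2, by rw [hu1, hu2, add_mul]⟩
      | neg y _ hy =>
        obtain ⟨u1, hu1⟩ := hy
        exact ⟨-u1, by rw [hu1, neg_mul]⟩
    obtain ⟨C, hCm, hCJ, hCrd, hCld⟩ := exists_invariant_generator σ hsurj J hL hR hne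
    obtain ⟨g, hgC⟩ := hgsJ C hCJ
    obtain ⟨f, hf⟩ := hgt.2.2.2 C (hCrd t htJ) (hCrd N hNJ)
    have hC0 : C ≠ 0 := monic_ne_zero σ hCm
    have hg0 : g ≠ 0 := fun h0 => hC0 (by rw [hgC, h0, zero_mul])
    obtain ⟨v, hv⟩ := hCld (g * C) (hL g C hCJ)
    have hCv : C = gs * v := by
      refine cancel_left σ hg0 ?_
      rw [hv]
      conv_lhs => rw [hgC]
      rw [mul_assoc]
    intro u
    constructor
    · obtain ⟨w, hw⟩ := hCld ((u * f) * C) (hL (u * f) C hCJ)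
      refine ⟨v * w, ?_⟩
      rw [hf, ← mul_assoc, hw, hCv]
      noncomm_ring
    · obtain ⟨w, hw⟩ := hCrd (C * u) (hR C u hCJ)
      refine ⟨f * w * g, ?_⟩
      rw [hf, mul_assoc, hw, hgC]
      noncomm_ring


/-- In `R = K[X;σ]` (`K = F_{q^a}`, `σ` the `q`-Frobenius) with `a ∣ n`: if `s` is a
total divisor of `t`, then `gcrd(s, X^n - 1)` is a total divisor of
`gcrd(t, X^n - 1)`. -/
theorem stmt13 {K : Type*} [Field K] [Fintype K]
    (q a n : ℕ) (hq : IsPrimePow q) (hK : Fintype.card K = q ^ a) (han : a ∣ n)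
    (σ : K →+* K) (hσ : ∀ x : K, σ x = x ^ q)
    (s t gs gt : SkewPolyRing σ) (h : TotalDvd σ s t)
    (hgs : IsGcrd σ gs s (Xel σ ^ n - 1)) (hgt : IsGcrd σ gt t (Xel σ ^ n - 1)) :
    TotalDvd σ gs gt := by
  exact stmt13' q a n hq hK han σ hσ s t gs gt h hgs hgt

end
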